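/- arXiv:2511.13287 — 5 statements merged into one kernel-verified Lean document; each statement's English description precedes it below -/
import Mathlib

section
/- Fix k ≥ 2 and a complex number z (or a formal variable). Define a sequence (w_m)_{m≥1} by the recursion w_m = -z^k - Σ_{r=1}^{m-1} Σ_{s=1}^{k-1} C(m-r-1, s-1) z^s w_r. Then for all m ≥ 1, w_m = -z^k · Σ_{r=0}^{m-1} ψ_{k,r} · C(m-1, r) · z^r. -/
open Finset

/-- `ψ_{k,r}`: 1 if `r ≡ 0 (mod k)`, -1 if `r ≡ 1 (mod k)`, 0 otherwise. -/
noncomputable def psi (k : ℕ) (r : ℤ) : ℂ :=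
  if r % (k : ℤ) = 0 then 1 else if r % (k : ℤ) = 1 then -1 else 0

lemma L1 (n j : ℕ) : ∑ t ∈ range n, t.choose j = n.choose (j+1) := by
  induction n with
  | zero => simp
  | succ n ih => rw [Finset.sum_range_succ, ih, Nat.choose_succ_succ' n j, Nat.add_comm]

lemma L2 (n : ℕ) : ∀ i j : ℕ, ∑ t ∈ range n, t.choose j * (n-1-t).choose i = n.choose (j+i+1) := by
  induction n with
  | zero => simp
  | succ n ih =>
    intro i j
    cases i with
    | zero => simpa using L1 (n+1) j
    | succ i =>
      rw [Finset.sum_range_succ]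
      have h0 : n.choose j * ((n+1)-1-n).choose (i+1) = 0 := by simp
      rw [h0, add_zero]
      have hc : ∀ t ∈ range n, t.choose j * ((n+1)-1-t).choose (i+1)
          = t.choose j * (n-1-t).choose i + t.choose j * (n-1-t).choose (i+1) := by
        intro t ht
        simp only [mem_range] at ht
        have : (n+1)-1-t = (n-1-t)+1 := by omega
        rw [this, Nat.choose_succ_succ', Nat.mul_add]
      rw [Finset.sum_congr rfl hc, Finset.sum_add_distrib, ih i j, ih (i+1) j]
      have h2 : j+(i+1)+1 = (j+i+1)+1 := by omega
      rw [h2, Nat.choose_succ_succ' n (j+i+1)]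

lemma psi_natCast (k n : ℕ) :
    psi k (n : ℤ) = if n % k = 0 then (1:ℂ) else if n % k = 1 then -1 else 0 := by
  unfold psi
  have h : (n : ℤ) % (k : ℤ) = ((n % k : ℕ) : ℤ) := by push_cast; rfl
  rw [h]
  norm_cast

lemma Pval (k : ℕ) (hk : 2 ≤ k) (n : ℕ) :
    ∑ j ∈ range n, psi k (j : ℤ) = if n % k = 1 then 1 else 0 := by
  induction n with
  | zero => simp
  | succ n ih =>
    rw [Finset.sum_range_succ, ih, psi_natCast]
    have hmod : (n+1) % k = (n % k + 1) % k := by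
      rw [Nat.add_mod, Nat.mod_eq_of_lt (show 1 < k by omega)]
    rw [hmod]
    by_cases hek : n % k + 1 = k
    · rw [hek, Nat.mod_self]
      split_ifs <;> first | contradiction | omega | norm_num
    · rw [Nat.mod_eq_of_lt (show n % k + 1 < k by have := Nat.mod_lt n (show 0 < k by omega); omega)]
      split_ifs <;> first | contradiction | omega | norm_num

lemma Lwin (k : ℕ) (hk : 2 ≤ k) (n : ℕ) (hn : 1 ≤ n) :
    ∑ j ∈ Icc (n - (k-1)) (n-1), psi k (j:ℤ) = -psi k (n:ℤ) := by
  have h1 : Icc (n-(k-1)) (n-1) = Ico (n-(k-1)) n := by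
    ext x; simp only [Finset.mem_Icc, Finset.mem_Ico]; omega
  rw [h1, Finset.sum_Ico_eq_sub _ (show n-(k-1) ≤ n by omega), Pval k hk, Pval k hk,
    psi_natCast]
  by_cases hnk : n < k
  · have h0 : n - (k-1) = 0 := by omega
    have hnn : n % k = n := Nat.mod_eq_of_lt hnk
    rw [h0, hnn, Nat.zero_mod]
    split_ifs <;> first | contradiction | omega | norm_num
  · have h2 : n - (k-1) = (n+1) - k := by omega
    have h3 : ((n+1)-k) % k = (n+1) % k := by
      conv_rhs => rw [show n+1 = (n+1-k)+k by omega]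
      rw [Nat.add_mod_right]
    have hmod : (n+1) % k = (n % k + 1) % k := by
      rw [Nat.add_mod, Nat.mod_eq_of_lt (show 1 < k by omega)]
    rw [h2, h3, hmod]
    by_cases hek : n % k + 1 = k
    · rw [hek, Nat.mod_self]
      split_ifs <;> first | contradiction | omega | norm_num
    · rw [Nat.mod_eq_of_lt (show n % k + 1 < k by have := Nat.mod_lt n (show 0 < k by omega); omega)]
      split_ifs <;> first | contradiction | omega | norm_num

lemma L2Icc (m s j : ℕ) (hm : 1 ≤ m) (hs : 1 ≤ s) :
    ∑ r ∈ Icc 1 (m-1), (m - r - 1).choose (s-1) * (r-1).choose j = (m-1).choose (j + s) := by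
  have h1 : Icc 1 (m-1) = Ico 1 m := by
    ext x; simp only [Finset.mem_Icc, Finset.mem_Ico]; omega
  rw [h1, Finset.sum_Ico_eq_sum_range]
  have hc : ∀ t ∈ range (m-1), (m - (1+t) - 1).choose (s-1) * ((1+t)-1).choose j
      = t.choose j * ((m-1)-1-t).choose (s-1) := by
    intro t ht
    rw [show m - (1+t) - 1 = (m-1)-1-t by omega, show (1+t)-1 = t by omega, Nat.mul_comm]
  rw [Finset.sum_congr rfl hc, L2 (m-1) (s-1) j, show j + (s-1) + 1 = j + s by omega]

lemma Lwin' (k : ℕ) (hk : 2 ≤ k) (n : ℕ) (hn : 1 ≤ n) :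
    ∑ s ∈ Icc 1 (k-1), (if s ≤ n then psi k ((n - s : ℕ) : ℤ) else 0) = -psi k (n:ℤ) := by
  rw [← Finset.sum_filter]
  have hfil : (Icc 1 (k-1)).filter (fun s => s ≤ n) = Icc 1 (min (k-1) n) := by
    ext x
    simp only [Finset.mem_filter, Finset.mem_Icc, le_min_iff]
    omega
  rw [hfil, ← Lwin k hk n hn]
  exact Finset.sum_nbij' (fun s => n - s) (fun j => n - j)
    (fun a ha => by simp only [Finset.mem_Icc] at *; omega)
    (fun a ha => by simp only [Finset.mem_Icc] at *; omega)
    (fun a ha => by simp only [Finset.mem_Icc] at ha; show n - (n - a) = a; omega)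
    (fun a ha => by simp only [Finset.mem_Icc] at ha; show n - (n - a) = a; omega)
    (fun a ha => rfl)

lemma key (k : ℕ) (hk : 2 ≤ k) (z : ℂ) (m : ℕ) (hm : 1 ≤ m) :
    ∑ r ∈ Icc 1 (m-1), ∑ s ∈ Icc 1 (k-1), ((m - r - 1).choose (s-1) : ℂ) * z^s *
      (∑ j ∈ range r, psi k j * ((r-1).choose j : ℂ) * z^j)
    = 1 - ∑ j ∈ range m, psi k j * ((m-1).choose j : ℂ) * z^j := by
  calc
    ∑ r ∈ Icc 1 (m-1), ∑ s ∈ Icc 1 (k-1), ((m - r - 1).choose (s-1) : ℂ) * z^s *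
        (∑ j ∈ range r, psi k j * ((r-1).choose j : ℂ) * z^j)
      = ∑ r ∈ Icc 1 (m-1), ∑ s ∈ Icc 1 (k-1), ∑ j ∈ range (m-1),
          (((m - r - 1).choose (s-1) * (r-1).choose j : ℕ) : ℂ) * (psi k j * (z^s * z^j)) := by
        refine Finset.sum_congr rfl fun r hr => Finset.sum_congr rfl fun s hs => ?_
        rw [Finset.mul_sum]
        rw [Finset.sum_congr rfl (fun j (hj : j ∈ range r) =>
          show ((m - r - 1).choose (s-1) : ℂ) * z^s * (psi k j * ((r-1).choose j : ℂ) * z^j)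
            = (((m - r - 1).choose (s-1) * (r-1).choose j : ℕ) : ℂ) * (psi k j * (z^s * z^j))
          from by push_cast; ring)]
        apply Finset.sum_subset
        · intro j hj
          simp only [Finset.mem_range] at *
          simp only [Finset.mem_Icc] at hr
          omega
        · intro j hj hj2
          have h0 : (r-1).choose j = 0 := by
            apply Nat.choose_eq_zero_of_lt
            simp only [Finset.mem_range] at *
            simp only [Finset.mem_Icc] at hr
            omega
          rw [h0]
          push_cast
          ring
    _ = ∑ s ∈ Icc 1 (k-1), ∑ j ∈ range (m-1), ∑ r ∈ Icc 1 (m-1),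
          (((m - r - 1).choose (s-1) * (r-1).choose j : ℕ) : ℂ) * (psi k j * (z^s * z^j)) := by
        rw [Finset.sum_comm]
        exact Finset.sum_congr rfl fun s _ => Finset.sum_comm
    _ = ∑ s ∈ Icc 1 (k-1), ∑ j ∈ range (m-1),
          (((m-1).choose (j+s) : ℕ) : ℂ) * (psi k j * (z^s * z^j)) := by
        refine Finset.sum_congr rfl fun s hs => Finset.sum_congr rfl fun j hj => ?_
        rw [← Finset.sum_mul, ← Nat.cast_sum,
          L2Icc m s j hm (by simp only [Finset.mem_Icc] at hs; exact hs.1)]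
    _ = ∑ s ∈ Icc 1 (k-1), ∑ n ∈ Ico s (s+(m-1)),
          (((m-1).choose n : ℕ) : ℂ) * (psi k ((n - s : ℕ) : ℤ) * z^n) := by
        refine Finset.sum_congr rfl fun s hs => ?_
        rw [Finset.sum_Ico_eq_sum_range, show s + (m-1) - s = m-1 by omega]
        refine Finset.sum_congr rfl fun j hj => ?_
        rw [show s + j - s = j by omega, Nat.add_comm j s, pow_add]
    _ = ∑ s ∈ Icc 1 (k-1), ∑ n ∈ Ico 1 m,
          (if s ≤ n then (((m-1).choose n : ℕ) : ℂ) * (psi k ((n - s : ℕ) : ℤ) * z^n) else 0) := by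
        refine Finset.sum_congr rfl fun s hs => ?_
        simp only [Finset.mem_Icc] at hs
        have step1 : ∑ n ∈ Ico s (s+(m-1)), (((m-1).choose n : ℕ) : ℂ) * (psi k ((n - s : ℕ) : ℤ) * z^n)
            = ∑ n ∈ Ico s (s+(m-1)), (if s ≤ n then (((m-1).choose n : ℕ) : ℂ) * (psi k ((n - s : ℕ) : ℤ) * z^n) else 0) := by
          refine Finset.sum_congr rfl fun n hn => ?_
          rw [if_pos]
          simp only [Finset.mem_Ico] at hn
          exact hn.1
        have step2 : ∑ n ∈ Ico s (s+(m-1)), (if s ≤ n then (((m-1).choose n : ℕ) : ℂ) * (psi k ((n - s : ℕ) : ℤ) * z^n) else 0)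
            = ∑ n ∈ Ico 1 (s+(m-1)), (if s ≤ n then (((m-1).choose n : ℕ) : ℂ) * (psi k ((n - s : ℕ) : ℤ) * z^n) else 0) :=
          Finset.sum_subset (Finset.Ico_subset_Ico (by omega) le_rfl)
            (fun n hn hn2 => by
              rw [if_neg]
              simp only [Finset.mem_Ico] at *
              omega)
        have step3 : ∑ n ∈ Ico 1 m, (if s ≤ n then (((m-1).choose n : ℕ) : ℂ) * (psi k ((n - s : ℕ) : ℤ) * z^n) else 0)
            = ∑ n ∈ Ico 1 (s+(m-1)), (if s ≤ n then (((m-1).choose n : ℕ) : ℂ) * (psi k ((n - s : ℕ) : ℤ) * z^n) else 0) :=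
          Finset.sum_subset (Finset.Ico_subset_Ico le_rfl (by omega))
            (fun n hn hn2 => by
              have hnm : m - 1 < n := by simp only [Finset.mem_Ico] at *; omega
              rw [Nat.choose_eq_zero_of_lt hnm]
              split_ifs <;> simp)
        rw [step1, step2, ← step3]
    _ = ∑ n ∈ Ico 1 m, (-psi k (n:ℤ)) * (((m-1).choose n : ℕ) : ℂ) * z^n := by
        rw [Finset.sum_comm]
        refine Finset.sum_congr rfl fun n hn => ?_
        simp only [Finset.mem_Ico] at hn
        rw [Finset.sum_congr rfl (fun s (hs : s ∈ Icc 1 (k-1)) =>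
          show (if s ≤ n then (((m-1).choose n : ℕ) : ℂ) * (psi k ((n - s : ℕ) : ℤ) * z^n) else 0)
            = (if s ≤ n then psi k ((n - s : ℕ) : ℤ) else 0) * ((((m-1).choose n : ℕ) : ℂ) * z^n)
          from by split_ifs <;> ring)]
        rw [← Finset.sum_mul, Lwin' k hk n hn.1]
        ring
    _ = 1 - ∑ j ∈ range m, psi k j * ((m-1).choose j : ℂ) * z^j := by
        rw [Finset.range_eq_Ico, Finset.sum_eq_sum_Ico_succ_bot hm]
        have hψ0 : psi k ((0:ℕ):ℤ) = 1 := by rw [psi_natCast]; simp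
        have h0 : psi k ((0:ℕ):ℤ) * (((m-1).choose 0 : ℕ) : ℂ) * z^0 = 1 := by
          rw [hψ0]; simp
        rw [h0]
        rw [Finset.sum_congr rfl (fun n (hn : n ∈ Ico 1 m) =>
          show (-psi k (n:ℤ)) * (((m-1).choose n : ℕ) : ℂ) * z^n
            = -(psi k (n:ℤ) * (((m-1).choose n : ℕ) : ℂ) * z^n) from by ring)]
        rw [Finset.sum_neg_distrib]
        ring

/-- The Goulden–Jackson weights for streaks of length `k` satisfy the closed formula. -/
theorem streak_weights_formula (k : ℕ) (hk : 2 ≤ k) (z : ℂ) (w : ℕ → ℂ)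
    (hw : ∀ m, 1 ≤ m →
      w m = -z ^ k - ∑ r ∈ Finset.Icc 1 (m - 1), ∑ s ∈ Finset.Icc 1 (k - 1),
        ((m - r - 1).choose (s - 1) : ℂ) * z ^ s * w r) :
    ∀ m, 1 ≤ m →
      w m = -z ^ k * ∑ r ∈ Finset.range m, psi k r * ((m - 1).choose r : ℂ) * z ^ r := by
  intro m
  induction m using Nat.strong_induction_on with
  | _ m ih =>
    intro hm
    rw [hw m hm]
    have hsum : ∑ r ∈ Finset.Icc 1 (m - 1), ∑ s ∈ Finset.Icc 1 (k - 1),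
        ((m - r - 1).choose (s - 1) : ℂ) * z ^ s * w r
      = -z^k * ∑ r ∈ Icc 1 (m-1), ∑ s ∈ Icc 1 (k-1), ((m - r - 1).choose (s-1) : ℂ) * z^s *
          (∑ j ∈ range r, psi k j * ((r-1).choose j : ℂ) * z^j) := by
      rw [Finset.mul_sum]
      refine Finset.sum_congr rfl fun r hr => ?_
      rw [Finset.mul_sum]
      refine Finset.sum_congr rfl fun s hs => ?_
      simp only [Finset.mem_Icc] at hr
      rw [ih r (by omega) hr.1]
      ring
    rw [hsum, key k hk z m hm]
    ring
end

section
/- Fix k ≥ 2 and m ∈ ℕ. Then Σ_{t=0}^{m} Σ_{s=0}^{k-1} ψ_{k,t} · C(m, s+t) · z^{s+t} = 1, as a polynomial identity in z (equivalently for all complex z). -/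
open Finset

lemma psi_nat (k t : ℕ) :
    psi k t = if t % k = 0 then 1 else if t % k = 1 then -1 else 0 := by
  unfold psi
  have h : ((t : ℤ)) % (k : ℤ) = ((t % k : ℕ) : ℤ) := by
    push_cast; ring
  rw [h]
  norm_cast

lemma psi_add_k (k a : ℕ) : psi k ((a + k : ℕ) : ℤ) = psi k a := by
  rw [psi_nat, psi_nat, Nat.add_mod_right]

lemma sum_psi_range (k : ℕ) (hk : 2 ≤ k) : ∑ s ∈ range k, psi k s = 0 := by
  have key : ∀ s ∈ range k, psi k s =
      (if s = 0 then (1:ℂ) else 0) + (if s = 1 then (-1:ℂ) else 0) := by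
    intro s hs
    rw [Finset.mem_range] at hs
    rw [psi_nat, Nat.mod_eq_of_lt hs]
    split_ifs <;> first | (exfalso; omega) | norm_num
  rw [Finset.sum_congr rfl key, Finset.sum_add_distrib,
    Finset.sum_ite_eq' (range k) 0 (fun _ => (1:ℂ)),
    Finset.sum_ite_eq' (range k) 1 (fun _ => (-1:ℂ))]
  rw [if_pos (by rw [Finset.mem_range]; omega), if_pos (by rw [Finset.mem_range]; omega)]
  norm_num

lemma sum_psi_shift (k : ℕ) (hk : 2 ≤ k) (a : ℕ) :
    ∑ s ∈ range k, psi k ((a + s : ℕ) : ℤ) = 0 := by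
  induction a with
  | zero => simpa using sum_psi_range k hk
  | succ a ih =>
    have key : ∑ s ∈ range k, psi k ((a + 1 + s : ℕ) : ℤ)
        = ∑ s ∈ range k, psi k ((a + (s + 1) : ℕ) : ℤ) := by
      apply Finset.sum_congr rfl
      intro s _
      congr 2
      omega
    have h1 : ∑ s ∈ range (k + 1), psi k ((a + s : ℕ) : ℤ)
        = (∑ s ∈ range k, psi k ((a + (s + 1) : ℕ) : ℤ)) + psi k ((a + 0 : ℕ) : ℤ) :=
      Finset.sum_range_succ' _ k
    have h2 : ∑ s ∈ range (k + 1), psi k ((a + s : ℕ) : ℤ)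
        = (∑ s ∈ range k, psi k ((a + s : ℕ) : ℤ)) + psi k ((a + k : ℕ) : ℤ) :=
      Finset.sum_range_succ _ k
    have h3 : psi k ((a + k : ℕ) : ℤ) = psi k ((a + 0 : ℕ) : ℤ) := by
      rw [psi_add_k]; norm_num
    have h4 : ∑ s ∈ range k, psi k ((a + (s + 1) : ℕ) : ℤ)
        = ∑ s ∈ range k, psi k ((a + s : ℕ) : ℤ) := by
      have h5 := h1.symm.trans h2
      rw [h3] at h5
      exact add_right_cancel h5
    rw [key, h4, ih]

lemma window (k : ℕ) (hk : 2 ≤ k) (r : ℕ) :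
    ∑ t ∈ Icc (r + 1 - k) r, psi k t = if r = 0 then 1 else 0 := by
  rcases Nat.eq_zero_or_pos r with hr | hr
  · subst hr
    have h0 : 0 + 1 - k = 0 := by omega
    rw [h0, if_pos rfl]
    rw [Finset.Icc_self, Finset.sum_singleton, psi_nat, Nat.zero_mod, if_pos rfl]
  · rw [if_neg (by omega)]
    by_cases h : k ≤ r + 1
    · have hIcc : Icc (r + 1 - k) r = Ico (r + 1 - k) (r + 1) := by
        rw [Finset.Ico_add_one_right_eq_Icc]
      rw [hIcc, Finset.sum_Ico_eq_sum_range]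
      have hlen : r + 1 - (r + 1 - k) = k := by omega
      rw [hlen]
      exact sum_psi_shift k hk (r + 1 - k)
    · have h0 : r + 1 - k = 0 := by omega
      rw [h0]
      have hIcc : Icc 0 r = range (r + 1) := by
        rw [Finset.range_eq_Ico, Finset.Ico_add_one_right_eq_Icc]
      rw [hIcc, ← sum_psi_range k hk]
      apply Finset.sum_subset
      · exact Finset.range_subset_range.mpr (by omega)
      · intro t htk htr
        rw [Finset.mem_range] at htk htr
        rw [psi_nat, Nat.mod_eq_of_lt htk, if_neg (by omega), if_neg (by omega)]

theorem psi_double_sum_eq_one (k : ℕ) (hk : 2 ≤ k) (m : ℕ) (z : ℂ) :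
    ∑ t ∈ Finset.range (m + 1), ∑ s ∈ Finset.range k,
      psi k t * (m.choose (s + t) : ℂ) * z ^ (s + t) = 1 := by
  have step1 : ∀ t ∈ range (m + 1),
      ∑ s ∈ range k, psi k t * (m.choose (s + t) : ℂ) * z ^ (s + t)
      = ∑ r ∈ range (m + k),
          if t ≤ r ∧ r < t + k then psi k t * (m.choose r : ℂ) * z ^ r else 0 := by
    intro t ht
    rw [Finset.mem_range] at ht
    have hcond : ∀ r : ℕ, (t ≤ r ∧ r < t + k) ↔ r ∈ Ico t (t + k) := by
      intro r; rw [Finset.mem_Ico]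
    have hrhs : (∑ r ∈ range (m + k),
          if t ≤ r ∧ r < t + k then psi k t * (m.choose r : ℂ) * z ^ r else 0)
        = ∑ r ∈ range (m + k) ∩ Ico t (t + k), psi k t * (m.choose r : ℂ) * z ^ r := by
      rw [← Finset.sum_ite_mem]
      exact Finset.sum_congr rfl fun r _ => if_congr (hcond r) rfl rfl
    have hinter : range (m + k) ∩ Ico t (t + k) = Ico t (t + k) := by
      apply Finset.inter_eq_right.mpr
      intro r hr
      rw [Finset.mem_Ico] at hr
      rw [Finset.mem_range]
      omega
    rw [hrhs, hinter, Finset.sum_Ico_eq_sum_range]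
    have hlen : t + k - t = k := by omega
    rw [hlen]
    apply Finset.sum_congr rfl
    intro s _
    rw [add_comm t s]
  rw [Finset.sum_congr rfl step1, Finset.sum_comm]
  have step3 : ∀ r ∈ range (m + k),
      (∑ t ∈ range (m + 1),
        if t ≤ r ∧ r < t + k then psi k t * (m.choose r : ℂ) * z ^ r else 0)
      = if r = 0 then (1 : ℂ) else 0 := by
    intro r _
    have factored : (∑ t ∈ range (m + 1),
        if t ≤ r ∧ r < t + k then psi k t * (m.choose r : ℂ) * z ^ r else 0)
        = (∑ t ∈ range (m + 1), if t ≤ r ∧ r < t + k then psi k t else 0)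
          * ((m.choose r : ℂ) * z ^ r) := by
      rw [Finset.sum_mul]
      apply Finset.sum_congr rfl
      intro t _
      split
      · ring
      · ring
    rw [factored]
    by_cases hrm : m < r
    · rw [Nat.choose_eq_zero_of_lt hrm]
      rw [if_neg (by omega : ¬ r = 0)]
      simp
    · push_neg at hrm
      have hA : (∑ t ∈ range (m + 1), if t ≤ r ∧ r < t + k then psi k t else 0)
          = ∑ t ∈ Icc (r + 1 - k) r, psi k t := by
        have hcond : ∀ t : ℕ, (t ≤ r ∧ r < t + k) ↔ t ∈ Icc (r + 1 - k) r := by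
          intro t
          rw [Finset.mem_Icc]
          omega
        rw [show (∑ t ∈ range (m + 1), if t ≤ r ∧ r < t + k then psi k t else 0)
            = ∑ t ∈ range (m + 1), if t ∈ Icc (r + 1 - k) r then psi k (t:ℕ) else 0 from
          Finset.sum_congr rfl fun t _ => if_congr (hcond t) rfl rfl]
        rw [Finset.sum_ite_mem]
        congr 1
        apply Finset.inter_eq_right.mpr
        intro t ht
        rw [Finset.mem_Icc] at ht
        rw [Finset.mem_range]
        omega
      rw [hA, window k hk r]
      rcases Nat.eq_zero_or_pos r with hr | hr
      · subst hr
        simp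
      · rw [if_neg (by omega : ¬ r = 0)]
        exact zero_mul _
  rw [Finset.sum_congr rfl step3]
  rw [Finset.sum_ite_eq' (range (m + k)) 0 (fun _ => (1:ℂ))]
  rw [if_pos (by rw [Finset.mem_range]; omega)]
end

section
/- For n ∈ ℕ and k ≥ 2, the two expressions for the generating function agree: 1 / (Σ_{r=0}^{n} ψ_{k,r} C(n,r) z^r) = k / (Σ_{s=1}^{k-1} (1 - ω_k^{-s})(1 + ω_k^s z)^n), for all complex z where the denominators are nonzero. -/
open Finset

/-- `ω_k = exp(2πi/k)`. -/
noncomputable def omega (k : ℕ) : ℂ := Complex.exp (2 * Real.pi * Complex.I / k)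

lemma sum_omega_zpow (k : ℕ) (hk : 2 ≤ k) (m : ℤ) :
    ∑ s ∈ Finset.range k, (omega k) ^ ((s : ℤ) * m) =
      if (k : ℤ) ∣ m then (k : ℂ) else 0 := by
  have hprim : IsPrimitiveRoot (omega k) k :=
    Complex.isPrimitiveRoot_exp k (by omega)
  have hrw : ∀ s : ℕ, (omega k) ^ ((s : ℤ) * m) = ((omega k) ^ m) ^ s := by
    intro s; rw [mul_comm, zpow_mul, zpow_natCast]
  simp only [hrw]
  by_cases h : (k : ℤ) ∣ m
  · rw [(hprim.zpow_eq_one_iff_dvd m).mpr h, if_pos h]; simp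
  · rw [geom_sum_eq (fun heq => h ((hprim.zpow_eq_one_iff_dvd m).mp heq))]
    have : ((omega k) ^ m) ^ k = 1 := by
      rw [← zpow_natCast, ← zpow_mul, mul_comm, zpow_mul, hprim.zpow_eq_one, one_zpow]
    rw [this, sub_self, zero_div, if_neg h]

theorem generating_function_two_forms (n : ℕ) (k : ℕ) (hk : 2 ≤ k) (z : ℂ)
    (h1 : ∑ r ∈ Finset.range (n + 1), psi k r * (n.choose r : ℂ) * z ^ r ≠ 0)
    (h2 : ∑ s ∈ Finset.Icc 1 (k - 1),
        (1 - (omega k) ^ (-(s : ℤ))) * (1 + (omega k) ^ s * z) ^ n ≠ 0) :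
    1 / (∑ r ∈ Finset.range (n + 1), psi k r * (n.choose r : ℂ) * z ^ r) =
      (k : ℂ) / (∑ s ∈ Finset.Icc 1 (k - 1),
        (1 - (omega k) ^ (-(s : ℤ))) * (1 + (omega k) ^ s * z) ^ n) := by
  rw [div_eq_div_iff h1 h2, one_mul, mul_comm]
  -- Goal: S2 = k * S1  (up to stated orientation; check)
  -- extend sum to range k
  have hins : Finset.range k = insert 0 (Finset.Icc 1 (k - 1)) := by
    ext x; simp [Finset.mem_range, Finset.mem_Icc]; omega
  have hext : ∑ s ∈ Finset.Icc 1 (k - 1),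
        (1 - (omega k) ^ (-(s : ℤ))) * (1 + (omega k) ^ s * z) ^ n
      = ∑ s ∈ Finset.range k,
        (1 - (omega k) ^ (-(s : ℤ))) * (1 + (omega k) ^ s * z) ^ n := by
    rw [hins, Finset.sum_insert (by simp)]
    norm_num
  rw [hext]
  have hexp : ∀ s : ℕ, (1 + (omega k) ^ s * z) ^ n
      = ∑ r ∈ Finset.range (n + 1), ((omega k) ^ s * z) ^ r * (n.choose r : ℂ) := by
    intro s
    rw [add_comm, add_pow]
    simp
  calc ∑ s ∈ Finset.range k,
        (1 - (omega k) ^ (-(s : ℤ))) * (1 + (omega k) ^ s * z) ^ n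
      = ∑ r ∈ Finset.range (n + 1), ∑ s ∈ Finset.range k,
          ((omega k) ^ ((s : ℤ) * r) - (omega k) ^ ((s : ℤ) * (r - 1)))
            * ((n.choose r : ℂ) * z ^ r) := by
        simp only [hexp, Finset.mul_sum]
        rw [Finset.sum_comm]
        refine Finset.sum_congr rfl fun r _ => Finset.sum_congr rfl fun s _ => ?_
        have hne : omega k ≠ 0 := Complex.exp_ne_zero _
        rw [mul_pow, sub_mul, one_mul]
        rw [show ((omega k) ^ s) ^ r = (omega k) ^ ((s : ℤ) * r) by
          rw [← pow_mul, ← zpow_natCast]; push_cast; ring_nf]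
        have hmul : (omega k) ^ (-(s : ℤ)) * (omega k) ^ ((s : ℤ) * (r : ℤ))
            = (omega k) ^ ((s : ℤ) * ((r : ℤ) - 1)) := by
          rw [← zpow_add₀ hne]; ring_nf
        linear_combination (-(z ^ r * (n.choose r : ℂ))) * hmul
    _ = ∑ r ∈ Finset.range (n + 1), psi k r * (n.choose r : ℂ) * z ^ r * k := by
        refine Finset.sum_congr rfl fun r _ => ?_
        rw [← Finset.sum_mul, Finset.sum_sub_distrib, sum_omega_zpow k hk, sum_omega_zpow k hk]
        have h01 : ¬ ((r : ℤ) % k = 0 ∧ (r : ℤ) % k = 1) := by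
          rintro ⟨a, b⟩; rw [a] at b; exact one_ne_zero b.symm
        have hd0 : (k : ℤ) ∣ (r : ℤ) ↔ (r : ℤ) % k = 0 := Int.dvd_iff_emod_eq_zero
        have hd1 : (k : ℤ) ∣ ((r : ℤ) - 1) ↔ (r : ℤ) % k = 1 := by
          rw [Int.dvd_iff_emod_eq_zero, ← Int.emod_eq_emod_iff_emod_sub_eq_zero]
          have h1k : (1 : ℤ) % k = 1 :=
            Int.emod_eq_of_lt (by norm_num) (by exact_mod_cast hk)
          rw [h1k]
        rw [psi]
        split_ifs with ha hb <;>
          simp_all [hd0, hd1] <;> ring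
    _ = (∑ r ∈ Finset.range (n + 1), psi k r * (n.choose r : ℂ) * z ^ r) * k := by
        rw [← Finset.sum_mul]
end

section
/- For n ∈ ℕ, k ≥ 2, and complex z with |z| < 1: Σ_{r=0}^{(k-1)n} ψ_{k,r} · B(n,k,r) · z^r = ((1 - z^k)^n / k) · Σ_{s=1}^{k} (1 - ω_k^{-s}) (1 - ω_k^s z)^{-n}. -/
open Finset Polynomial

/-- `B(n,k,r)`: the coefficient of `x^r` in `(1 + x + ⋯ + x^{k-1})^n`. -/
noncomputable def genBinom (n k r : ℕ) : ℂ :=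
  ((∑ i ∈ Finset.range k, (Polynomial.X : Polynomial ℂ) ^ i) ^ n).coeff r

lemma geom_sum_root {k : ℕ} (hk : k ≠ 0) {u : ℂ} (hu : u ^ k = 1) :
    ∑ s ∈ Finset.range k, u ^ s = if u = 1 then (k : ℂ) else 0 := by
  split_ifs with h
  · simp [h]
  · rw [geom_sum_eq h, hu]; simp

lemma filter_lemma {k : ℕ} (hk : 2 ≤ k) (r : ℕ) :
    (k : ℂ) * psi k r = ∑ s ∈ Finset.range k, (1 - omega k ^ (-(s:ℤ))) * ((omega k) ^ s) ^ r := by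
  have hk0 : k ≠ 0 := by omega
  have hω : IsPrimitiveRoot (omega k) k := by
    unfold omega; exact Complex.isPrimitiveRoot_exp k hk0
  have hω0 : omega k ≠ 0 := hω.ne_zero hk0
  have expand : ∀ s ∈ Finset.range k,
      (1 - omega k ^ (-(s:ℤ))) * ((omega k) ^ s) ^ r
        = ((omega k) ^ r) ^ s - ((omega k) ^ ((r:ℤ) - 1)) ^ s := by
    intro s _
    simp only [sub_mul, one_mul, ← zpow_natCast, ← zpow_mul, ← zpow_add₀ hω0]
    ring_nf
  rw [Finset.sum_congr rfl expand, Finset.sum_sub_distrib]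
  have h1 : ((omega k) ^ r) ^ k = 1 := by
    rw [← pow_mul, mul_comm, pow_mul, hω.pow_eq_one, one_pow]
  have h2 : ((omega k) ^ ((r:ℤ) - 1)) ^ k = 1 := by
    rw [← zpow_natCast ((omega k) ^ ((r:ℤ)-1)), ← zpow_mul, mul_comm, zpow_mul,
      zpow_natCast, hω.pow_eq_one, one_zpow]
  rw [geom_sum_root hk0 h1, geom_sum_root hk0 h2]
  have hd1 : ((omega k) ^ r = 1) ↔ (r : ℤ) % (k:ℤ) = 0 := by
    rw [hω.pow_eq_one_iff_dvd, ← Int.natCast_dvd_natCast, Int.dvd_iff_emod_eq_zero]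
  have hkk : (2:ℤ) ≤ (k:ℤ) := by exact_mod_cast hk
  have h3 : (0:ℤ) ≤ (r:ℤ) % (k:ℤ) := Int.emod_nonneg _ (by exact_mod_cast hk0)
  have h4 : (r:ℤ) % (k:ℤ) < (k:ℤ) := Int.emod_lt_of_pos _ (by omega)
  have h1k : (1:ℤ) % (k:ℤ) = 1 := Int.emod_eq_of_lt (by norm_num) (by omega)
  have hd2 : ((omega k) ^ ((r:ℤ) - 1) = 1) ↔ (r : ℤ) % (k:ℤ) = 1 := by
    rw [hω.zpow_eq_one_iff_dvd, Int.dvd_iff_emod_eq_zero, Int.sub_emod, h1k]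
    constructor
    · intro h
      have h5 : (k:ℤ) ∣ ((r:ℤ) % (k:ℤ) - 1) := Int.dvd_of_emod_eq_zero h
      have h6 := Int.eq_zero_of_abs_lt_dvd h5 (by rw [abs_lt]; omega)
      omega
    · intro h
      rw [h]
      norm_num
  by_cases ha : (r:ℤ) % (k:ℤ) = 0
  · have hb : ¬ (r:ℤ) % (k:ℤ) = 1 := by omega
    simp [psi, ha, hb, hd1, hd2]
  · by_cases hb : (r:ℤ) % (k:ℤ) = 1
    · simp [psi, ha, hb, hd1, hd2]
    · simp [psi, ha, hb, hd1, hd2]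

lemma sum_genBinom (n k : ℕ) (hk : 1 ≤ k) (w : ℂ) :
    ∑ r ∈ Finset.range ((k-1)*n + 1), genBinom n k r * w ^ r
      = (∑ i ∈ Finset.range k, w ^ i) ^ n := by
  have hdeg : ((∑ i ∈ Finset.range k, (X:ℂ[X]) ^ i) ^ n).natDegree < (k-1)*n + 1 := by
    apply Nat.lt_succ_of_le
    calc ((∑ i ∈ Finset.range k, (X:ℂ[X]) ^ i) ^ n).natDegree
        ≤ n * (∑ i ∈ Finset.range k, (X:ℂ[X]) ^ i).natDegree := Polynomial.natDegree_pow_le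
      _ ≤ n * (k-1) := by
          gcongr
          apply Polynomial.natDegree_sum_le_of_forall_le
          intro i hi
          simp only [Polynomial.natDegree_X_pow]
          exact Nat.le_sub_one_of_lt (Finset.mem_range.mp hi)
      _ = (k-1)*n := mul_comm _ _
  have h := Polynomial.eval_eq_sum_range' hdeg w
  simp only [Polynomial.eval_pow, Polynomial.eval_finset_sum, Polynomial.eval_pow,
    Polynomial.eval_X] at h
  simp only [genBinom]
  exact h.symm

theorem psi_genBinom_identity (n k : ℕ) (hk : 2 ≤ k) (z : ℂ) (hz : ‖z‖ < 1) :
    ∑ r ∈ Finset.range ((k - 1) * n + 1), psi k r * genBinom n k r * z ^ r =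
      ((1 - z ^ k) ^ n / (k : ℂ)) *
        ∑ s ∈ Finset.Icc 1 k,
          (1 - (omega k) ^ (-(s : ℤ))) * (1 - (omega k) ^ s * z) ^ (-(n : ℤ)) := by
  have hk0 : k ≠ 0 := by omega
  have hkC : (k:ℂ) ≠ 0 := Nat.cast_ne_zero.mpr hk0
  have hω : IsPrimitiveRoot (omega k) k := by
    unfold omega; exact Complex.isPrimitiveRoot_exp k hk0
  have hωk : omega k ^ k = 1 := hω.pow_eq_one
  have hnorm : ‖omega k‖ = 1 := Complex.norm_eq_one_of_pow_eq_one hωk hk0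
  have hwnorm : ∀ s : ℕ, ‖omega k ^ s * z‖ < 1 := by
    intro s; rw [norm_mul, norm_pow, hnorm, one_pow, one_mul]; exact hz
  have hw1 : ∀ s : ℕ, omega k ^ s * z ≠ 1 := by
    intro s h
    have h2 := hwnorm s
    rw [h, norm_one] at h2
    exact lt_irrefl 1 h2
  have hgeom : ∀ s : ℕ, (∑ i ∈ Finset.range k, (omega k ^ s * z) ^ i) ^ n
      = (1 - z ^ k) ^ n * (1 - omega k ^ s * z) ^ (-(n:ℤ)) := by
    intro s
    have hwk : (omega k ^ s * z) ^ k = z ^ k := by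
      rw [mul_pow, ← pow_mul, mul_comm s k, pow_mul, hωk, one_pow, one_mul]
    have hd : ((omega k ^ s * z) ^ k - 1) / (omega k ^ s * z - 1)
        = (1 - z ^ k) / (1 - omega k ^ s * z) := by
      rw [hwk, ← neg_div_neg_eq, neg_sub, neg_sub]
    rw [geom_sum_eq (hw1 s), hd, div_pow, zpow_neg, zpow_natCast, div_eq_mul_inv]
  have lhs_eq : ∑ r ∈ Finset.range ((k - 1) * n + 1), psi k r * genBinom n k r * z ^ r
      = (k:ℂ)⁻¹ * ∑ s ∈ Finset.range k, (1 - omega k ^ (-(s:ℤ))) *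
          ((1 - z ^ k) ^ n * (1 - omega k ^ s * z) ^ (-(n:ℤ))) := by
    calc ∑ r ∈ Finset.range ((k-1)*n+1), psi k r * genBinom n k r * z ^ r
        = ∑ r ∈ Finset.range ((k-1)*n+1), (k:ℂ)⁻¹ *
            ∑ s ∈ Finset.range k, (1 - omega k ^ (-(s:ℤ))) *
              (genBinom n k r * (omega k ^ s * z) ^ r) := by
          refine Finset.sum_congr rfl fun r _ => ?_
          have h := filter_lemma hk r
          have hpsi : psi k r = (k:ℂ)⁻¹ *
              ∑ s ∈ Finset.range k, (1 - omega k ^ (-(s:ℤ))) * (omega k ^ s) ^ r := by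
            rw [← h]; field_simp
          rw [hpsi]
          rw [mul_assoc, mul_assoc, Finset.sum_mul]
          congr 1
          refine Finset.sum_congr rfl fun s _ => ?_
          rw [mul_pow]; ring
      _ = (k:ℂ)⁻¹ * ∑ s ∈ Finset.range k, (1 - omega k ^ (-(s:ℤ))) *
            ∑ r ∈ Finset.range ((k-1)*n+1), genBinom n k r * (omega k ^ s * z) ^ r := by
          rw [← Finset.mul_sum, Finset.sum_comm]
          congr 1
          exact Finset.sum_congr rfl fun s _ => (Finset.mul_sum _ _ _).symm
      _ = _ := by
          congr 1
          refine Finset.sum_congr rfl fun s _ => ?_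
          rw [sum_genBinom n k (by omega) (omega k ^ s * z), hgeom s]
  have hIcc : ∑ s ∈ Finset.Icc 1 k, (1 - omega k ^ (-(s:ℤ))) * (1 - omega k ^ s * z) ^ (-(n:ℤ))
      = ∑ s ∈ Finset.range k, (1 - omega k ^ (-(s:ℤ))) * (1 - omega k ^ s * z) ^ (-(n:ℤ)) := by
    have e1 : Finset.Icc 1 k = insert k (Finset.Icc 1 (k-1)) := by
      ext x; simp only [Finset.mem_Icc, Finset.mem_insert]; omega
    have e2 : Finset.range k = insert 0 (Finset.Icc 1 (k-1)) := by
      ext x; simp only [Finset.mem_range, Finset.mem_Icc, Finset.mem_insert]; omega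
    have Fk : (1 - omega k ^ (-((k:ℕ):ℤ))) * (1 - omega k ^ (k:ℕ) * z) ^ (-(n:ℤ)) = 0 := by
      rw [zpow_neg, zpow_natCast, hωk]; simp
    have F0 : (1 - omega k ^ (-((0:ℕ):ℤ))) * (1 - omega k ^ (0:ℕ) * z) ^ (-(n:ℤ)) = 0 := by
      simp
    rw [e1, e2, Finset.sum_insert (by simp only [Finset.mem_Icc]; omega),
      Finset.sum_insert (by simp only [Finset.mem_Icc]; omega), Fk, F0, zero_add]
  rw [lhs_eq, hIcc, div_eq_mul_inv, mul_assoc, Finset.mul_sum, Finset.mul_sum, Finset.mul_sum]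
  refine Finset.sum_congr rfl fun s _ => ?_
  ring
end

section
/- Fix k ≥ 2. Define u_r(x) = (1/k) Σ_{s=1}^{k-1} (1 - ω_k^{rs}) e^{ω_k^s (1-x)} for r = 1, …, k-1. Then these functions satisfy the ODE system u_r'(x) = u_1(x) - u_{r+1}(x) for 1 ≤ r ≤ k-2, u_{k-1}'(x) = u_1(x), with boundary conditions u_r(1) = 1 for all r = 1, …, k-1. -/
open Finset

/-- `u_r(x) = (1/k) Σ_{s=1}^{k-1} (1 - ω_k^{rs}) e^{ω_k^s (1-x)}`. -/
noncomputable def u (k r : ℕ) (x : ℝ) : ℂ :=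
  (1 / (k : ℂ)) * ∑ s ∈ Finset.Icc 1 (k - 1),
    (1 - (omega k) ^ (r * s)) * Complex.exp ((omega k) ^ s * (1 - (x : ℂ)))

lemma omega_prim (k : ℕ) (hk : 2 ≤ k) : IsPrimitiveRoot (omega k) k := by
  have := Complex.isPrimitiveRoot_exp k (by omega)
  simpa [omega, mul_comm] using this

lemma exp_term_hasDerivAt (c : ℂ) (x : ℝ) :
    HasDerivAt (fun y : ℝ => Complex.exp (c * (1 - (y : ℂ))))
      (-c * Complex.exp (c * (1 - (x : ℝ)))) x := by
  have h1 : HasDerivAt (fun z : ℂ => Complex.exp (c * (1 - z)))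
      (-c * Complex.exp (c * (1 - (x : ℂ)))) (x : ℂ) := by
    have h2 : HasDerivAt (fun z : ℂ => c * (1 - z)) (-c) (x : ℂ) := by
      simpa using ((hasDerivAt_id (x : ℂ)).const_sub 1).const_mul c
    simpa [mul_comm] using h2.cexp
  exact h1.comp_ofReal

lemma u_hasDerivAt (k r : ℕ) (x : ℝ) :
    HasDerivAt (u k r)
      ((1 / (k : ℂ)) * ∑ s ∈ Finset.Icc 1 (k - 1),
        (1 - (omega k) ^ (r * s)) * (-(omega k ^ s)) *
          Complex.exp ((omega k) ^ s * (1 - (x : ℂ)))) x := by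
  have h : HasDerivAt (fun y : ℝ => ∑ s ∈ Finset.Icc 1 (k - 1),
      (1 - (omega k) ^ (r * s)) * Complex.exp ((omega k) ^ s * (1 - (y : ℂ))))
      (∑ s ∈ Finset.Icc 1 (k - 1),
        (1 - (omega k) ^ (r * s)) * (-(omega k ^ s)) *
          Complex.exp ((omega k) ^ s * (1 - (x : ℂ)))) x := by
    apply HasDerivAt.fun_sum
    intro s _
    have := (exp_term_hasDerivAt (omega k ^ s) x).const_mul (1 - (omega k) ^ (r * s))
    convert this using 1
    · rfl
    ring
  have hu : u k r = fun y : ℝ => (1 / (k : ℂ)) * ∑ s ∈ Finset.Icc 1 (k - 1),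
      (1 - (omega k) ^ (r * s)) * Complex.exp ((omega k) ^ s * (1 - (y : ℂ))) := rfl
  rw [hu]
  exact h.const_mul (1 / (k : ℂ))

theorem u_solves_ode_system (k : ℕ) (hk : 2 ≤ k) :
    (∀ r, 1 ≤ r → r ≤ k - 2 → ∀ x : ℝ, HasDerivAt (u k r) (u k 1 x - u k (r + 1) x) x) ∧
      (∀ x : ℝ, HasDerivAt (u k (k - 1)) (u k 1 x) x) ∧
      (∀ r, 1 ≤ r → r ≤ k - 1 → u k r 1 = 1) := by
  have hprim := omega_prim k hk
  have hko : (omega k) ^ k = 1 := hprim.pow_eq_one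
  have hk0 : (k : ℂ) ≠ 0 := Nat.cast_ne_zero.mpr (by omega)
  refine ⟨?_, ?_, ?_⟩
  · intro r _ _ x
    have h := u_hasDerivAt k r x
    convert h using 1
    simp only [u, ← mul_sub, ← Finset.sum_sub_distrib]
    congr 1
    apply Finset.sum_congr rfl
    intro s _
    have : (omega k) ^ ((r + 1) * s) = (omega k) ^ (r * s) * (omega k) ^ s := by
      rw [← pow_add]; ring_nf
    rw [this]
    ring
  · intro x
    have h := u_hasDerivAt k (k - 1) x
    convert h using 1
    simp only [u]
    congr 1
    apply Finset.sum_congr rfl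
    intro s hs
    have h1 : (omega k) ^ ((k - 1) * s) * (omega k) ^ s = 1 := by
      rw [← pow_add]
      have : (k - 1) * s + s = k * s := by
        calc (k - 1) * s + s = ((k - 1) + 1) * s := by ring
          _ = k * s := by rw [Nat.sub_add_cancel (by omega)]
      rw [this, pow_mul, hko, one_pow]
    calc (1 - omega k ^ (1 * s)) * Complex.exp (omega k ^ s * (1 - (x : ℂ)))
        = ((omega k ^ ((k-1) * s) * omega k ^ s) - omega k ^ s) *
            Complex.exp (omega k ^ s * (1 - (x : ℂ))) := by rw [h1, one_mul]
      _ = (1 - omega k ^ ((k - 1) * s)) * -omega k ^ s *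
            Complex.exp (omega k ^ s * (1 - (x : ℂ))) := by ring
  · intro r hr1 hr2
    have hzne : (omega k) ^ r ≠ 1 :=
      hprim.pow_ne_one_of_pos_of_lt (by omega) (by omega)
    have hgeom : ∑ s ∈ Finset.range k, ((omega k) ^ r) ^ s = 0 := by
      rw [geom_sum_eq hzne]
      have : ((omega k) ^ r) ^ k = 1 := by
        rw [← pow_mul, mul_comm, pow_mul, hko, one_pow]
      simp [this]
    have hIcc : Finset.Icc 1 (k - 1) = Finset.Ico 1 k := by
      rw [← Finset.Ico_add_one_right_eq_Icc]
      congr 1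
      omega
    have hsum : ∑ s ∈ Finset.Icc 1 (k - 1), (1 - (omega k) ^ (r * s)) = (k : ℂ) := by
      have hsplit : ∑ s ∈ Finset.range k, (1 - (omega k) ^ (r * s)) =
          (1 - (omega k) ^ (r * 0)) + ∑ s ∈ Finset.Ico 1 k, (1 - (omega k) ^ (r * s)) := by
        rw [Finset.range_eq_Ico]
        exact Finset.sum_eq_sum_Ico_succ_bot (by omega) _
      have hrange : ∑ s ∈ Finset.range k, (1 - (omega k) ^ (r * s)) = (k : ℂ) := by
        rw [Finset.sum_sub_distrib]
        have : ∑ s ∈ Finset.range k, (omega k) ^ (r * s) = 0 := by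
          simpa [pow_mul] using hgeom
        simp [this]
      rw [hIcc, ← sub_eq_iff_eq_add'.mpr hsplit, hrange]
      simp
    simp only [u, Complex.ofReal_one, sub_self, mul_zero, Complex.exp_zero, mul_one]
    rw [hsum]
    field_simp
end
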